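/- An ωPN has an infinite execution from m₀ if and only if it has a self-covering execution from m₀, i.e., a finite execution m₀ →t₁ m₁ →t₂ ⋯ →tₙ mₙ such that m_k ≼ mₙ for some k < n. -/

import Mathlib

/-- An ω-Petri net over a set of places `P`: a set `T` of transitions,
each with input and output valuations in ℕ ∪ {ω} (modelled as `WithTop ℕ`). -/
structure OmegaPN (P : Type) where
  T : Type
  I : T → P → WithTop ℕ
  O : T → P → WithTop ℕ

namespace OmegaPN

variable {P : Type}

/-- Concrete firing: `t` is firable from `m` (i.e. `m p ≥ I t p` whenever
`I t p ≠ ω`) and `m'` is obtained by consuming `i p` tokens (with `i p = I t p`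
if finite, an arbitrary value `≤ m p` if `I t p = ω`) and producing `o p` tokens
(with `o p = O t p` if finite, arbitrary if `O t p = ω`) in each place `p`. -/
def Fires (N : OmegaPN P) (t : N.T) (m m' : P → ℕ) : Prop :=
  ∃ i o : P → ℕ,
    (∀ p, N.I t p ≠ ⊤ → (i p : WithTop ℕ) = N.I t p) ∧
    (∀ p, N.O t p ≠ ⊤ → (o p : WithTop ℕ) = N.O t p) ∧
    (∀ p, i p ≤ m p) ∧
    (∀ p, m' p = m p - i p + o p)

/-- `m →σ m'` : firing the finite sequence `σ` of transitions from `m` can yield `m'`. -/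
inductive FiresSeq (N : OmegaPN P) : List N.T → (P → ℕ) → (P → ℕ) → Prop
  | nil (m : P → ℕ) : FiresSeq N [] m m
  | cons {t : N.T} {σ : List N.T} {m m₁ m₂ : P → ℕ} :
      N.Fires t m m₁ → FiresSeq N σ m₁ m₂ → FiresSeq N (t :: σ) m m₂

end OmegaPN

open OmegaPN

/-- Strong monotonicity: firing is preserved under adding tokens. -/
lemma fires_add {P : Type} {N : OmegaPN P} {t : N.T} {m m' : P → ℕ}
    (h : N.Fires t m m') (d : P → ℕ) :
    N.Fires t (fun p => m p + d p) (fun p => m' p + d p) := by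
  obtain ⟨i, o, hi, ho, hle, heq⟩ := h
  refine ⟨i, o, hi, ho, fun p => le_trans (hle p) (Nat.le_add_right _ _), fun p => ?_⟩
  show m' p + d p = m p + d p - i p + o p
  have := heq p
  have := hle p
  omega
  -- m p + d p - i p + o p = (m p - i p + o p) + d p, using i p ≤ m p

lemma firesSeq_add {P : Type} {N : OmegaPN P} {σ : List N.T} {m m' : P → ℕ}
    (h : N.FiresSeq σ m m') (d : P → ℕ) :
    N.FiresSeq σ (fun p => m p + d p) (fun p => m' p + d p) := by
  induction h with
  | nil m => exact FiresSeq.nil _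
  | cons hf _ ih => exact FiresSeq.cons (fires_add hf d) ih

lemma firesSeq_append {P : Type} {N : OmegaPN P} {σ τ : List N.T} {a b c : P → ℕ}
    (h₁ : N.FiresSeq σ a b) (h₂ : N.FiresSeq τ b c) : N.FiresSeq (σ ++ τ) a c := by
  induction h₁ with
  | nil m => simpa using h₂
  | cons hf _ ih => exact FiresSeq.cons hf (ih h₂)

/-- `Good m`: there is a nonempty self-covering cycle from `m`. -/
def Good {P : Type} (N : OmegaPN P) (m : P → ℕ) : Prop :=
  ∃ (σ : List N.T) (m' : P → ℕ), σ ≠ [] ∧ N.FiresSeq σ m m' ∧ ∀ p, m p ≤ m' p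

lemma good_step {P : Type} {N : OmegaPN P} {m : P → ℕ} (h : Good N m) :
    ∃ t m₁, N.Fires t m m₁ ∧ Good N m₁ := by
  obtain ⟨σ, m', hne, hs, hle⟩ := h
  cases hs with
  | nil => exact absurd rfl hne
  | @cons t σ' _ m₁ _ hf hs' =>
    refine ⟨t, m₁, hf, σ' ++ [t], fun p => m₁ p + (m' p - m p), ?_, ?_, ?_⟩
    · simp
    · refine firesSeq_append hs' ?_
      have := fires_add hf (fun p => m' p - m p)
      have hm : (fun p => m p + (m' p - m p)) = m' := by
        funext p; have := hle p; omega
      rw [hm] at this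
      exact FiresSeq.cons this (FiresSeq.nil _)
    · intro p; exact Nat.le_add_right _ _

lemma good_infinite {P : Type} {N : OmegaPN P} {m : P → ℕ} (h : Good N m) :
    ∃ (ts : ℕ → N.T) (ms : ℕ → P → ℕ), ms 0 = m ∧
      ∀ n : ℕ, N.Fires (ts n) (ms n) (ms (n + 1)) := by
  have step : ∀ x : {m : P → ℕ // Good N m},
      ∃ y : N.T × {m : P → ℕ // Good N m}, N.Fires y.1 x.1 y.2.1 := by
    rintro ⟨m, hm⟩
    obtain ⟨t, m₁, hf, hg⟩ := good_step hm
    exact ⟨⟨t, m₁, hg⟩, hf⟩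
  choose f hf using step
  let g : ℕ → {m : P → ℕ // Good N m} := fun n => Nat.rec ⟨m, h⟩ (fun _ x => (f x).2) n
  refine ⟨fun n => (f (g n)).1, fun n => (g n).1, rfl, fun n => hf (g n)⟩

lemma prepend_infinite {P : Type} {N : OmegaPN P} {σ : List N.T} {m₀ m : P → ℕ}
    (hs : N.FiresSeq σ m₀ m)
    (h : ∃ (ts : ℕ → N.T) (ms : ℕ → P → ℕ), ms 0 = m ∧
        ∀ n : ℕ, N.Fires (ts n) (ms n) (ms (n + 1))) :
    ∃ (ts : ℕ → N.T) (ms : ℕ → P → ℕ), ms 0 = m₀ ∧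
        ∀ n : ℕ, N.Fires (ts n) (ms n) (ms (n + 1)) := by
  induction hs with
  | nil m => exact h
  | @cons t σ' m m₁ m₂ hf _ ih =>
    obtain ⟨ts, ms, h0, hstep⟩ := ih h
    refine ⟨fun n => Nat.casesOn n t ts, fun n => Nat.casesOn n m ms, rfl, fun n => ?_⟩
    cases n with
    | zero => simpa [h0] using hf
    | succ k => exact hstep k

/-- The segment of an infinite run is a finite firing sequence. -/
lemma seg_firesSeq {P : Type} {N : OmegaPN P} {ts : ℕ → N.T} {ms : ℕ → P → ℕ}
    (hstep : ∀ n : ℕ, N.Fires (ts n) (ms n) (ms (n + 1))) :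
    ∀ (len a : ℕ), N.FiresSeq ((List.range' a len).map ts) (ms a) (ms (a + len)) := by
  intro len
  induction len with
  | zero => intro a; simpa using FiresSeq.nil (ms a)
  | succ k ih =>
    intro a
    rw [List.range'_succ, List.map_cons]
    have : a + (k + 1) = (a + 1) + k := by omega
    rw [this]
    exact FiresSeq.cons (hstep a) (ih (a + 1))

/-- An ωPN has an infinite execution from `m₀` iff it has a self-covering
execution from `m₀`: a finite execution `m₀ →σ₁ m_k →σ₂ m_n` with a nonempty
`σ₂` and `m_k ≼ m_n` componentwise. -/
theorem infinite_execution_iff_self_covering {P : Type} [Fintype P]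
    (N : OmegaPN P) (m₀ : P → ℕ) :
    (∃ (ts : ℕ → N.T) (ms : ℕ → P → ℕ), ms 0 = m₀ ∧
        ∀ n : ℕ, N.Fires (ts n) (ms n) (ms (n + 1))) ↔
    (∃ (σ₁ σ₂ : List N.T) (mk mn : P → ℕ), σ₂ ≠ [] ∧
        N.FiresSeq σ₁ m₀ mk ∧ N.FiresSeq σ₂ mk mn ∧ ∀ p, mk p ≤ mn p) := by
  constructor
  · rintro ⟨ts, ms, h0, hstep⟩
    -- Dickson's lemma: find k < n with ms k ≤ ms n
    obtain ⟨g, hg⟩ := (Set.isPWO_of_wellQuasiOrderedLE (Set.univ : Set (P → ℕ))).exists_monotone_subseq (f := ms)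
      (fun _ => Set.mem_univ _)
    have hlt : g 0 < g 1 := g.strictMono (by norm_num)
    refine ⟨(List.range' 0 (g 0)).map ts, (List.range' (g 0) (g 1 - g 0)).map ts,
      ms (g 0), ms (g 1), ?_, ?_, ?_, ?_⟩
    · simp only [ne_eq, List.map_eq_nil_iff]
      intro hcon
      have h1 : (List.range' (g 0) (g 1 - g 0)).length = 0 := by rw [hcon]; rfl
      rw [List.length_range'] at h1
      omega
    · have := seg_firesSeq hstep (g 0) 0
      simpa [h0] using this
    · have := seg_firesSeq hstep (g 1 - g 0) (g 0)
      have heq : g 0 + (g 1 - g 0) = g 1 := by omega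
      rwa [heq] at this
    · intro p
      exact hg (by norm_num : (0:ℕ) ≤ 1) p
  · rintro ⟨σ₁, σ₂, mk, mn, hne, h₁, h₂, hle⟩
    exact prepend_infinite h₁ (good_infinite ⟨σ₂, mn, hne, h₂, hle⟩)
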